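/- arXiv:1507.06276 — 4 statements merged into one kernel-verified Lean document; each statement's English description precedes it below -/
import Mathlib

section
/- Let (H,R) be a braided bialgebra over a field k and let K ∈ H be an invertible element satisfying Δ(K) = (K⊗1)·R·(1⊗K)·R_21 in H⊗H. Then K satisfies the reflection equation (K⊗1)·R·(1⊗K)·R_21 = R·(1⊗K)·R_21·(K⊗1) in H⊗H. -/
/- Braided bialgebras: basic tensor-leg maps and the universal R-matrix axioms. -/

open scoped TensorProduct

noncomputable section

variable (k H : Type*) [Field k] [Ring H] [Bialgebra k H]

/-- The flip `a ⊗ b ↦ b ⊗ a` on `H ⊗[k] H`, as an algebra homomorphism. -/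
def tflip : H ⊗[k] H →ₐ[k] H ⊗[k] H := (Algebra.TensorProduct.comm k H H).toAlgHom

/-- `s ⊗ t ↦ s ⊗ t ⊗ 1 : H ⊗ H → H ⊗ H ⊗ H`. -/
def leg12 : H ⊗[k] H →ₐ[k] H ⊗[k] (H ⊗[k] H) :=
  Algebra.TensorProduct.map (AlgHom.id k H) Algebra.TensorProduct.includeLeft

/-- `s ⊗ t ↦ s ⊗ 1 ⊗ t : H ⊗ H → H ⊗ H ⊗ H`. -/
def leg13 : H ⊗[k] H →ₐ[k] H ⊗[k] (H ⊗[k] H) :=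
  Algebra.TensorProduct.map (AlgHom.id k H) Algebra.TensorProduct.includeRight

/-- `s ⊗ t ↦ 1 ⊗ s ⊗ t : H ⊗ H → H ⊗ H ⊗ H`. -/
def leg23 : H ⊗[k] H →ₐ[k] H ⊗[k] (H ⊗[k] H) :=
  Algebra.TensorProduct.includeRight

/-- `Δ ⊗ id : H ⊗ H → H ⊗ H ⊗ H`. -/
def comulLeft : H ⊗[k] H →ₐ[k] H ⊗[k] (H ⊗[k] H) :=
  (Algebra.TensorProduct.assoc k k k H H H).toAlgHom.comp
    (Algebra.TensorProduct.map (Bialgebra.comulAlgHom k H) (AlgHom.id k H))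

/-- `id ⊗ Δ : H ⊗ H → H ⊗ H ⊗ H`. -/
def comulRight : H ⊗[k] H →ₐ[k] H ⊗[k] (H ⊗[k] H) :=
  Algebra.TensorProduct.map (AlgHom.id k H) (Bialgebra.comulAlgHom k H)

/-- `(H, R)` is a braided bialgebra with `R⁻¹ = Rinv`:  `R` is an invertible element of
`H ⊗ H` satisfying `Δ(x) · R = R · Δ^op(x)` for all `x` and the two hexagon identities
`(Δ ⊗ id)(R) = R₂₃ · R₁₃` and `(id ⊗ Δ)(R) = R₁₂ · R₁₃`. -/
def IsUniversalRMatrix (R Rinv : H ⊗[k] H) : Prop :=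
  R * Rinv = 1 ∧ Rinv * R = 1 ∧
  (∀ x : H, Bialgebra.comulAlgHom k H x * R = R * tflip k H (Bialgebra.comulAlgHom k H x)) ∧
  comulLeft k H R = leg23 k H R * leg13 k H R ∧
  comulRight k H R = leg12 k H R * leg13 k H R

/-- an invertible `K ∈ H` with
`Δ(K) = (K ⊗ 1) · R · (1 ⊗ K) · R₂₁` satisfies the reflection equation
`(K ⊗ 1) · R · (1 ⊗ K) · R₂₁ = R · (1 ⊗ K) · R₂₁ · (K ⊗ 1)` in `H ⊗ H`. -/
theorem universal_K_matrix_satisfies_reflection_equation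
    (R Rinv : H ⊗[k] H) (hR : IsUniversalRMatrix k H R Rinv)
    (K Kinv : H) (hK : K * Kinv = 1) (hK' : Kinv * K = 1)
    (hΔK : Bialgebra.comulAlgHom k H K =
      (K ⊗ₜ[k] (1 : H)) * R * ((1 : H) ⊗ₜ[k] K) * tflip k H R) :
    (K ⊗ₜ[k] (1 : H)) * R * ((1 : H) ⊗ₜ[k] K) * tflip k H R
      = R * ((1 : H) ⊗ₜ[k] K) * tflip k H R * (K ⊗ₜ[k] (1 : H)) := by
  obtain ⟨h1, h2, h3, -, -⟩ := hR
  have hflipflip : tflip k H (tflip k H R) = R := by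
    have : ∀ x : H ⊗[k] H, tflip k H (tflip k H x) = x := by
      intro x
      induction x using TensorProduct.induction_on with
      | zero => simp
      | tmul a b => simp [tflip]
      | add x y hx hy => simp only [map_add, hx, hy]
    exact this R
  have key := h3 K
  rw [hΔK, map_mul, map_mul, map_mul, hflipflip] at key
  have hf1 : tflip k H (K ⊗ₜ[k] (1 : H)) = (1 : H) ⊗ₜ[k] K := by
    simp [tflip]
  have hf2 : tflip k H ((1 : H) ⊗ₜ[k] K) = K ⊗ₜ[k] (1 : H) := by
    simp [tflip]
  rw [hf1, hf2] at key
  -- key : (K⊗1)*R*(1⊗K)*flip R * R = R * ((1⊗K) * flip R * (K⊗1) * R)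
  calc (K ⊗ₜ[k] (1 : H)) * R * ((1 : H) ⊗ₜ[k] K) * tflip k H R
      = (K ⊗ₜ[k] (1 : H)) * R * ((1 : H) ⊗ₜ[k] K) * tflip k H R * (R * Rinv) := by
        rw [h1, mul_one]
    _ = ((K ⊗ₜ[k] (1 : H)) * R * ((1 : H) ⊗ₜ[k] K) * tflip k H R * R) * Rinv := by
        simp only [mul_assoc]
    _ = (R * ((1 : H) ⊗ₜ[k] K * tflip k H R * (K ⊗ₜ[k] (1 : H)) * R)) * Rinv := by
        rw [key]
    _ = R * ((1 : H) ⊗ₜ[k] K) * tflip k H R * (K ⊗ₜ[k] (1 : H)) * (R * Rinv) := by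
        simp only [mul_assoc]
    _ = R * ((1 : H) ⊗ₜ[k] K) * tflip k H R * (K ⊗ₜ[k] (1 : H)) := by
        rw [h1, mul_one]
end
end

section
/- Let (H,R) be a braided bialgebra over a field k, let φ : H → H be a bialgebra automorphism with (φ⊗φ)(R) = R, and let K ∈ H be an invertible element satisfying Δ(K) = (K⊗1)·(id⊗φ)(R)·(1⊗K)·R_21 in H⊗H. Then the φ-twisted reflection equation holds: (K⊗1)·(id⊗φ)(R)·(1⊗K)·R_21 = R·(1⊗K)·(φ⊗id)(R_21)·(K⊗1) in H⊗H. -/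
/- Braided bialgebras: basic tensor-leg maps and the universal R-matrix axioms. -/

open scoped TensorProduct

noncomputable section

variable (k H : Type*) [Field k] [Ring H] [Bialgebra k H]

lemma tflip_tflip (x : H ⊗[k] H) : tflip k H (tflip k H x) = x := by
  induction x using TensorProduct.induction_on with
  | zero => simp
  | tmul a b => simp [tflip]
  | add x y hx hy => simp [map_add, hx, hy]

lemma tflip_map (f : H →ₐ[k] H) (x : H ⊗[k] H) :
    tflip k H (Algebra.TensorProduct.map (AlgHom.id k H) f x)
      = Algebra.TensorProduct.map f (AlgHom.id k H) (tflip k H x) := by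
  induction x using TensorProduct.induction_on with
  | zero => simp
  | tmul a b => simp [tflip]
  | add x y hx hy => simp [map_add, hx, hy]

/-- if `φ` is an automorphism of the braided bialgebra `(H, R)`
(so `(φ ⊗ φ)(R) = R`) and `K ∈ H` is invertible with
`Δ(K) = (K ⊗ 1) · (id ⊗ φ)(R) · (1 ⊗ K) · R₂₁`, then the `φ`-twisted reflection
equation `(K ⊗ 1) · (id ⊗ φ)(R) · (1 ⊗ K) · R₂₁ = R · (1 ⊗ K) · (φ ⊗ id)(R₂₁) · (K ⊗ 1)`
holds in `H ⊗ H`. -/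
theorem phi_universal_K_matrix_satisfies_twisted_reflection_equation
    (R Rinv : H ⊗[k] H) (hR : IsUniversalRMatrix k H R Rinv)
    (φ : H ≃ₐc[k] H)
    (hφR : Algebra.TensorProduct.map (φ.toBialgHom : H →ₐ[k] H)
      (φ.toBialgHom : H →ₐ[k] H) R = R)
    (K Kinv : H) (hK : K * Kinv = 1) (hK' : Kinv * K = 1)
    (hΔK : Bialgebra.comulAlgHom k H K =
      (K ⊗ₜ[k] (1 : H)) *
        Algebra.TensorProduct.map (AlgHom.id k H) (φ.toBialgHom : H →ₐ[k] H) R *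
        ((1 : H) ⊗ₜ[k] K) * tflip k H R) :
    (K ⊗ₜ[k] (1 : H)) *
        Algebra.TensorProduct.map (AlgHom.id k H) (φ.toBialgHom : H →ₐ[k] H) R *
        ((1 : H) ⊗ₜ[k] K) * tflip k H R
      = R * ((1 : H) ⊗ₜ[k] K) *
          Algebra.TensorProduct.map (φ.toBialgHom : H →ₐ[k] H) (AlgHom.id k H)
            (tflip k H R) *
          (K ⊗ₜ[k] (1 : H)) := by
  obtain ⟨hRR, hRR', hint, -, -⟩ := hR
  have h1 := hint K
  rw [hΔK] at h1
  have hflip : tflip k H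
      ((K ⊗ₜ[k] (1 : H)) *
        Algebra.TensorProduct.map (AlgHom.id k H) (φ.toBialgHom : H →ₐ[k] H) R *
        ((1 : H) ⊗ₜ[k] K) * tflip k H R)
      = ((1 : H) ⊗ₜ[k] K) *
          Algebra.TensorProduct.map (φ.toBialgHom : H →ₐ[k] H) (AlgHom.id k H)
            (tflip k H R) * (K ⊗ₜ[k] (1 : H)) * R := by
    rw [map_mul, map_mul, map_mul, tflip_tflip, tflip_map]
    simp [tflip]
  rw [hflip] at h1
  calc (K ⊗ₜ[k] (1 : H)) *
        Algebra.TensorProduct.map (AlgHom.id k H) (φ.toBialgHom : H →ₐ[k] H) R *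
        ((1 : H) ⊗ₜ[k] K) * tflip k H R
      = (K ⊗ₜ[k] (1 : H)) *
        Algebra.TensorProduct.map (AlgHom.id k H) (φ.toBialgHom : H →ₐ[k] H) R *
        ((1 : H) ⊗ₜ[k] K) * tflip k H R * R * Rinv := by
        rw [mul_assoc _ R Rinv, hRR, mul_one]
    _ = R * (((1 : H) ⊗ₜ[k] K) *
          Algebra.TensorProduct.map (φ.toBialgHom : H →ₐ[k] H) (AlgHom.id k H)
            (tflip k H R) * (K ⊗ₜ[k] (1 : H)) * R) * Rinv := by rw [h1]
    _ = R * ((1 : H) ⊗ₜ[k] K) *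
          Algebra.TensorProduct.map (φ.toBialgHom : H →ₐ[k] H) (AlgHom.id k H)
            (tflip k H R) * (K ⊗ₜ[k] (1 : H)) := by
        rw [mul_assoc R, mul_assoc, mul_assoc, mul_assoc, hRR, mul_one]
        simp only [mul_assoc]
end
end

section
/- Let (H,R) be a braided bialgebra over a field k and set C = R·R_21 ∈ H⊗H. Then in H⊗H⊗H one has (id⊗Δ)(C) = C_{12}·R_{23}·C_{13}·R_{32}·(R_{23}·R_{32})^{-1}, where, writing C = Σ c_i⊗d_i, one sets C_{12} = Σ c_i⊗d_i⊗1, C_{13} = Σ c_i⊗1⊗d_i, R_{23} = 1⊗R, and R_{32} = 1⊗R_21. -/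
/- Braided bialgebras: basic tensor-leg maps and the universal R-matrix axioms. -/

open scoped TensorProduct

noncomputable section

variable (k H : Type*) [Field k] [Ring H] [Bialgebra k H]

/- ========= auxiliary material ========= -/

/-- The cyclic permutation `a ⊗ b ⊗ c ↦ c ⊗ a ⊗ b` on `H ⊗ H ⊗ H`. -/
def rho : H ⊗[k] (H ⊗[k] H) →ₐ[k] H ⊗[k] (H ⊗[k] H) :=
  (Algebra.TensorProduct.comm k (H ⊗[k] H) H).toAlgHom.comp
    (Algebra.TensorProduct.assoc k k k H H H).symm.toAlgHom

/-- The permutation `a ⊗ b ⊗ c ↦ b ⊗ a ⊗ c` on `H ⊗ H ⊗ H`. -/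
def rho2 : H ⊗[k] (H ⊗[k] H) →ₐ[k] H ⊗[k] (H ⊗[k] H) :=
  (Algebra.TensorProduct.assoc k k k H H H).toAlgHom.comp
    ((Algebra.TensorProduct.map (Algebra.TensorProduct.comm k H H).toAlgHom
        (AlgHom.id k H)).comp
      (Algebra.TensorProduct.assoc k k k H H H).symm.toAlgHom)

lemma rho_comulLeft (z : H ⊗[k] H) :
    rho k H (comulLeft k H z) = comulRight k H (tflip k H z) := by
  induction z using TensorProduct.induction_on with
  | zero => simp
  | tmul a b => simp [rho, comulLeft, comulRight, tflip]
  | add x y hx hy => simp [map_add, hx, hy]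

lemma rho_leg23 (z : H ⊗[k] H) :
    rho k H (leg23 k H z) = leg13 k H (tflip k H z) := by
  induction z using TensorProduct.induction_on with
  | zero => simp
  | tmul a b => simp [rho, leg23, leg13, tflip]
  | add x y hx hy => simp [map_add, hx, hy]

lemma rho_leg13 (z : H ⊗[k] H) :
    rho k H (leg13 k H z) = leg12 k H (tflip k H z) := by
  induction z using TensorProduct.induction_on with
  | zero => simp
  | tmul a b => simp [rho, leg13, leg12, tflip]
  | add x y hx hy => simp [map_add, hx, hy]

lemma rho2_leg12 (z : H ⊗[k] H) :
    rho2 k H (leg12 k H z) = leg12 k H (tflip k H z) := by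
  induction z using TensorProduct.induction_on with
  | zero => simp
  | tmul a b => simp [rho2, leg12, tflip]
  | add x y hx hy => simp [map_add, hx, hy]

lemma rho2_leg13 (z : H ⊗[k] H) :
    rho2 k H (leg13 k H z) = leg23 k H z := by
  induction z using TensorProduct.induction_on with
  | zero => simp
  | tmul a b => simp [rho2, leg13, leg23, tflip]
  | add x y hx hy => simp [map_add, hx, hy]

lemma rho2_tmul (a : H) (w : H ⊗[k] H) :
    rho2 k H (a ⊗ₜ[k] w)
      = ((1 : H) ⊗ₜ[k] (a ⊗ₜ[k] (1 : H))) * leg13 k H w := by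
  induction w using TensorProduct.induction_on with
  | zero => simp
  | tmul u v =>
      simp [rho2, leg13, Algebra.TensorProduct.tmul_mul_tmul]
  | add x y hx hy => simp [TensorProduct.tmul_add, map_add, hx, hy, mul_add]

lemma mid_comm (a : H) (x : H ⊗[k] H) :
    leg13 k H x * ((1 : H) ⊗ₜ[k] (a ⊗ₜ[k] (1 : H)))
      = ((1 : H) ⊗ₜ[k] (a ⊗ₜ[k] (1 : H))) * leg13 k H x := by
  induction x using TensorProduct.induction_on with
  | zero => simp
  | tmul u v => simp [leg13, Algebra.TensorProduct.tmul_mul_tmul]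
  | add x y hx hy => simp [map_add, add_mul, mul_add, hx, hy]

lemma comul_comm_C (R : H ⊗[k] H)
    (hcomm : ∀ x : H, Bialgebra.comulAlgHom k H x * R
        = R * tflip k H (Bialgebra.comulAlgHom k H x)) (x : H) :
    Bialgebra.comulAlgHom k H x * (R * tflip k H R)
      = (R * tflip k H R) * Bialgebra.comulAlgHom k H x := by
  have h2 : tflip k H (Bialgebra.comulAlgHom k H x) * tflip k H R
      = tflip k H R * Bialgebra.comulAlgHom k H x := by
    have := congrArg (tflip k H) (hcomm x)
    simpa [map_mul, tflip_tflip] using this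
  rw [← mul_assoc, hcomm x, mul_assoc, h2, ← mul_assoc]

lemma leg13C_comm (C : H ⊗[k] H)
    (hC : ∀ x : H, Bialgebra.comulAlgHom k H x * C = C * Bialgebra.comulAlgHom k H x)
    (z : H ⊗[k] H) :
    leg13 k H C * rho2 k H (comulRight k H z)
      = rho2 k H (comulRight k H z) * leg13 k H C := by
  induction z using TensorProduct.induction_on with
  | zero => simp
  | tmul a b =>
      have : comulRight k H (a ⊗ₜ[k] b) = a ⊗ₜ[k] Bialgebra.comulAlgHom k H b := by
        simp [comulRight]
      rw [this, rho2_tmul]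
      calc leg13 k H C * (((1:H) ⊗ₜ[k] (a ⊗ₜ[k] (1:H))) * leg13 k H (Bialgebra.comulAlgHom k H b))
          = ((1:H) ⊗ₜ[k] (a ⊗ₜ[k] (1:H))) * (leg13 k H C * leg13 k H (Bialgebra.comulAlgHom k H b)) := by
            rw [← mul_assoc, mid_comm, mul_assoc]
        _ = ((1:H) ⊗ₜ[k] (a ⊗ₜ[k] (1:H))) * leg13 k H (C * Bialgebra.comulAlgHom k H b) := by
            rw [map_mul]
        _ = ((1:H) ⊗ₜ[k] (a ⊗ₜ[k] (1:H))) * leg13 k H (Bialgebra.comulAlgHom k H b * C) := by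
            rw [hC b]
        _ = (((1:H) ⊗ₜ[k] (a ⊗ₜ[k] (1:H))) * leg13 k H (Bialgebra.comulAlgHom k H b)) * leg13 k H C := by
            rw [map_mul, mul_assoc]
  | add x y hx hy => simp only [map_add, add_mul, mul_add, hx, hy]

/-- in a braided bialgebra `(H, R)`, the element `C = R · R₂₁`
satisfies `(id ⊗ Δ)(C) = C₁₂ · R₂₃ · C₁₃ · R₃₂ · (R₂₃ · R₃₂)⁻¹` in `H ⊗ H ⊗ H`,
where `R₃₂ = 1 ⊗ R₂₁` and `Q` denotes the (two-sided) inverse of `R₂₃ · R₃₂`. -/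
theorem id_comul_of_R_R21
    (R Rinv : H ⊗[k] H) (hR : IsUniversalRMatrix k H R Rinv)
    (Q : H ⊗[k] (H ⊗[k] H))
    (hQ : leg23 k H R * leg23 k H (tflip k H R) * Q = 1)
    (hQ' : Q * (leg23 k H R * leg23 k H (tflip k H R)) = 1) :
    comulRight k H (R * tflip k H R)
      = leg12 k H (R * tflip k H R) * leg23 k H R *
          leg13 k H (R * tflip k H R) * leg23 k H (tflip k H R) * Q := by
  obtain ⟨-, -, hcomm, hex1, hex2⟩ := hR
  set C := R * tflip k H R with hCdef
  have hC : ∀ x : H, Bialgebra.comulAlgHom k H x * C = C * Bialgebra.comulAlgHom k H x :=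
    comul_comm_C k H R hcomm
  -- Step 1: comulRight (tflip R) = leg13 (tflip R) * leg12 (tflip R)
  have step1 : comulRight k H (tflip k H R)
      = leg13 k H (tflip k H R) * leg12 k H (tflip k H R) := by
    have := congrArg (rho k H) hex1
    rw [rho_comulLeft, map_mul, rho_leg23, rho_leg13] at this
    exact this
  -- Step 2: rho2 (comulRight R) = leg12 (tflip R) * leg23 R
  have step2 : rho2 k H (comulRight k H R)
      = leg12 k H (tflip k H R) * leg23 k H R := by
    have := congrArg (rho2 k H) hex2
    rw [map_mul, rho2_leg12, rho2_leg13] at this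
    exact this
  -- Step 3: leg13 C commutes with leg12 (tflip R) * leg23 R
  have step3 : leg13 k H C * (leg12 k H (tflip k H R) * leg23 k H R)
      = (leg12 k H (tflip k H R) * leg23 k H R) * leg13 k H C := by
    rw [← step2]
    exact leg13C_comm k H C hC R
  -- LHS
  have lhs : comulRight k H C = leg12 k H R * leg13 k H C * leg12 k H (tflip k H R) := by
    rw [hCdef, map_mul, hex2, step1, map_mul]
    rw [mul_assoc, ← mul_assoc (leg13 k H R), ← map_mul, ← mul_assoc]
  rw [lhs]
  symm
  -- RHS
  calc leg12 k H C * leg23 k H R * leg13 k H C * leg23 k H (tflip k H R) * Q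
      = leg12 k H R * ((leg12 k H (tflip k H R) * leg23 k H R) * leg13 k H C) *
          (leg23 k H (tflip k H R) * Q) := by
        rw [hCdef, map_mul]; simp only [mul_assoc]
    _ = leg12 k H R * (leg13 k H C * (leg12 k H (tflip k H R) * leg23 k H R)) *
          (leg23 k H (tflip k H R) * Q) := by rw [step3]
    _ = leg12 k H R * leg13 k H C * leg12 k H (tflip k H R) *
          (leg23 k H R * leg23 k H (tflip k H R) * Q) := by simp only [mul_assoc]
    _ = leg12 k H R * leg13 k H C * leg12 k H (tflip k H R) := by rw [hQ, mul_one]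
end
end

section
/- Let (H,R) be a braided bialgebra over a field k and let θ ∈ H be an invertible central element satisfying Δ(θ) = (R·R_21)^{-1}·(θ⊗θ). Set K' = (1⊗θ^{-1})·R·R_21 ∈ H⊗H. Then in H⊗H⊗H one has (id⊗Δ)(K') = K'_{12}·R_{23}·K'_{13}·R_{32}, where, writing K' = Σ a_i⊗b_i, one sets K'_{12} = Σ a_i⊗b_i⊗1, K'_{13} = Σ a_i⊗1⊗b_i, R_{23} = 1⊗R, and R_{32} = 1⊗R_21. -/
/- Braided bialgebras: basic tensor-leg maps and the universal R-matrix axioms. -/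

open scoped TensorProduct

noncomputable section

variable (k H : Type*) [Field k] [Ring H] [Bialgebra k H]

/-! ### Auxiliary machinery -/

/-- swap legs 2,3 -/
def t23 : H ⊗[k] (H ⊗[k] H) →ₐ[k] H ⊗[k] (H ⊗[k] H) :=
  Algebra.TensorProduct.map (AlgHom.id k H) (tflip k H)

/-- swap legs 1,2 -/
def t12 : H ⊗[k] (H ⊗[k] H) →ₐ[k] H ⊗[k] (H ⊗[k] H) :=
  (Algebra.TensorProduct.assoc k k k H H H).toAlgHom.comp
    ((Algebra.TensorProduct.map (tflip k H) (AlgHom.id k H)).comp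
      (Algebra.TensorProduct.assoc k k k H H H).symm.toAlgHom)

@[simp] lemma tflip_tmul (a b : H) : tflip k H (a ⊗ₜ[k] b) = b ⊗ₜ[k] a := rfl

@[simp] lemma t23_tmul (a b c : H) :
    t23 k H (a ⊗ₜ[k] (b ⊗ₜ[k] c)) = a ⊗ₜ[k] (c ⊗ₜ[k] b) := rfl

@[simp] lemma t12_tmul (a b c : H) :
    t12 k H (a ⊗ₜ[k] (b ⊗ₜ[k] c)) = b ⊗ₜ[k] (a ⊗ₜ[k] c) := by
  simp [t12, Algebra.TensorProduct.assoc_symm_tmul, Algebra.TensorProduct.assoc_tmul]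

@[simp] lemma leg12_tmul (a b : H) :
    leg12 k H (a ⊗ₜ[k] b) = a ⊗ₜ[k] (b ⊗ₜ[k] (1 : H)) := rfl

@[simp] lemma leg13_tmul (a b : H) :
    leg13 k H (a ⊗ₜ[k] b) = a ⊗ₜ[k] ((1 : H) ⊗ₜ[k] b) := rfl

lemma leg23_apply (z : H ⊗[k] H) : leg23 k H z = (1 : H) ⊗ₜ[k] z := rfl

@[simp] lemma comulRight_tmul (a b : H) :
    comulRight k H (a ⊗ₜ[k] b) = a ⊗ₜ[k] (Bialgebra.comulAlgHom k H b) := rfl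

lemma t23_leg12 (z : H ⊗[k] H) : t23 k H (leg12 k H z) = leg13 k H z := by
  induction z using TensorProduct.induction_on with
  | zero => simp
  | tmul a b => simp
  | add x y hx hy => simp only [map_add, hx, hy]

lemma t23_leg13 (z : H ⊗[k] H) : t23 k H (leg13 k H z) = leg12 k H z := by
  induction z using TensorProduct.induction_on with
  | zero => simp
  | tmul a b => simp
  | add x y hx hy => simp only [map_add, hx, hy]

lemma t23_leg23 (z : H ⊗[k] H) : t23 k H (leg23 k H z) = leg23 k H (tflip k H z) := by
  rw [leg23_apply, leg23_apply]
  show (AlgHom.id k H) 1 ⊗ₜ[k] (tflip k H z) = _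
  simp

lemma t12_leg12 (z : H ⊗[k] H) : t12 k H (leg12 k H z) = leg12 k H (tflip k H z) := by
  induction z using TensorProduct.induction_on with
  | zero => simp
  | tmul a b => simp
  | add x y hx hy => simp only [map_add, hx, hy]

lemma t12_leg13 (z : H ⊗[k] H) : t12 k H (leg13 k H z) = leg23 k H z := by
  induction z using TensorProduct.induction_on with
  | zero => simp
  | tmul a b => simp [leg23_apply]
  | add x y hx hy => simp only [map_add, hx, hy]

lemma t12_leg23 (z : H ⊗[k] H) : t12 k H (leg23 k H z) = leg13 k H z := by
  induction z using TensorProduct.induction_on with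
  | zero => simp
  | tmul a b => simp [leg23_apply]
  | add x y hx hy => simp only [map_add, hx, hy]

/-- `(id ⊗ Δ)(flip z) = σ((Δ ⊗ id)(z))` where `σ(a⊗b⊗c) = c⊗a⊗b`. -/
lemma comulRight_tflip (z : H ⊗[k] H) :
    comulRight k H (tflip k H z) = t12 k H (t23 k H (comulLeft k H z)) := by
  induction z using TensorProduct.induction_on with
  | zero => simp
  | tmul a b =>
    have h : comulLeft k H (a ⊗ₜ[k] b)
        = (Algebra.TensorProduct.assoc k k k H H H) ((Bialgebra.comulAlgHom k H a) ⊗ₜ[k] b) := rfl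
    rw [tflip_tmul, comulRight_tmul, h]
    induction (Bialgebra.comulAlgHom k H a) using TensorProduct.induction_on with
    | zero => simp
    | tmul x y => simp [Algebra.TensorProduct.assoc_tmul]
    | add u v hu hv => simp only [TensorProduct.tmul_add, TensorProduct.add_tmul,
        map_add, hu, hv]
  | add x y hx hy => simp only [map_add, hx, hy]

section helpers
variable {A : Type*} [Semigroup A]

lemma reassoc3 {a b c d e f : A} (h : a * b * c = d * e * f) (x : A) :
    a * (b * (c * x)) = d * (e * (f * x)) := by
  rw [← mul_assoc, ← mul_assoc, ← mul_assoc, h, mul_assoc, mul_assoc]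

lemma reassoc3' {a b c d e f : A} (h : a * b * c = d * e * f) :
    a * (b * c) = d * (e * f) := by
  rw [← mul_assoc, h, mul_assoc]

lemma swap_central {e a x : A} (h : e * a = a * e) : a * (e * x) = e * (a * x) := by
  rw [← mul_assoc, ← h, mul_assoc]

end helpers

lemma central_tmul2 (b c : H) (hb : ∀ x, b * x = x * b) (hc : ∀ x, c * x = x * c)
    (w : H ⊗[k] H) : (b ⊗ₜ[k] c) * w = w * (b ⊗ₜ[k] c) := by
  induction w using TensorProduct.induction_on with
  | zero => simp
  | tmul x y => simp [Algebra.TensorProduct.tmul_mul_tmul, hb x, hc y]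
  | add u v hu hv => simp only [mul_add, add_mul, hu, hv]

lemma central_tmul3 (a b c : H) (ha : ∀ x, a * x = x * a) (hb : ∀ x, b * x = x * b)
    (hc : ∀ x, c * x = x * c) (z : H ⊗[k] (H ⊗[k] H)) :
    (a ⊗ₜ[k] (b ⊗ₜ[k] c)) * z = z * (a ⊗ₜ[k] (b ⊗ₜ[k] c)) := by
  induction z using TensorProduct.induction_on with
  | zero => simp
  | tmul x w => simp [Algebra.TensorProduct.tmul_mul_tmul, ha x,
      central_tmul2 k H b c hb hc w]
  | add u v hu hv => simp only [mul_add, add_mul, hu, hv]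

lemma intertwine23 (R : H ⊗[k] H)
    (hcom : ∀ x : H, Bialgebra.comulAlgHom k H x * R
      = R * tflip k H (Bialgebra.comulAlgHom k H x)) (z : H ⊗[k] H) :
    comulRight k H z * leg23 k H R = leg23 k H R * t23 k H (comulRight k H z) := by
  induction z using TensorProduct.induction_on with
  | zero => simp
  | tmul a b =>
    rw [comulRight_tmul, leg23_apply]
    have ht : t23 k H (a ⊗ₜ[k] (Bialgebra.comulAlgHom k H b))
        = a ⊗ₜ[k] tflip k H (Bialgebra.comulAlgHom k H b) := rfl
    rw [ht, Algebra.TensorProduct.tmul_mul_tmul, Algebra.TensorProduct.tmul_mul_tmul,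
      mul_one, one_mul, hcom b]
  | add x y hx hy => simp only [map_add, add_mul, mul_add, hx, hy]

lemma core_identity {M : Type*} [Semigroup M] (a a' b b' c c' : M)
    (Y1 : a * b * c = c * b * a) (Y2 : a' * c * b = b * c * a')
    (Y3 : c' * b' * a' = a' * b' * c') (Y4 : b * a * c' = c' * a * b) :
    c * (c' * (a * (b * (b' * a')))) = a * (a' * (c * (b * (b' * c')))) := by
  calc c * (c' * (a * (b * (b' * a'))))
      = c * (b * (a * (c' * (b' * a')))) := by rw [reassoc3 Y4.symm]
    _ = a * (b * (c * (c' * (b' * a')))) := reassoc3 Y1.symm _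
    _ = a * (b * (c * (a' * (b' * c')))) := by rw [reassoc3' Y3]
    _ = a * (a' * (c * (b * (b' * c')))) := by rw [reassoc3 Y2.symm]

set_option maxHeartbeats 1600000 in
/-- in a braided bialgebra `(H, R)` with an invertible central element `θ`
satisfying `Δ(θ) = (R · R₂₁)⁻¹ · (θ ⊗ θ)` (where `(R · R₂₁)⁻¹ = R₂₁⁻¹ · R⁻¹`),
the element `K' = (1 ⊗ θ⁻¹) · R · R₂₁` satisfies
`(id ⊗ Δ)(K') = K'₁₂ · R₂₃ · K'₁₃ · R₃₂` in `H ⊗ H ⊗ H`. -/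
theorem id_comul_of_ribbon_twisted_R_R21
    (R Rinv : H ⊗[k] H) (hR : IsUniversalRMatrix k H R Rinv)
    (θ θinv : H) (hθ : θ * θinv = 1) (hθ' : θinv * θ = 1)
    (hcentral : ∀ x : H, θ * x = x * θ)
    (hΔθ : Bialgebra.comulAlgHom k H θ
      = (tflip k H Rinv * Rinv) * (θ ⊗ₜ[k] θ)) :
    comulRight k H (((1 : H) ⊗ₜ[k] θinv) * R * tflip k H R)
      = leg12 k H (((1 : H) ⊗ₜ[k] θinv) * R * tflip k H R) * leg23 k H R *
          leg13 k H (((1 : H) ⊗ₜ[k] θinv) * R * tflip k H R) *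
          leg23 k H (tflip k H R) := by
  obtain ⟨hRr, hRl, hcom, hhexL, hhexR⟩ := hR
  -- θinv is central
  have hinvc : ∀ x : H, θinv * x = x * θinv := by
    intro x
    calc θinv * x = θinv * x * (θ * θinv) := by rw [hθ, mul_one]
    _ = θinv * (x * θ) * θinv := by simp only [mul_assoc]
    _ = θinv * θ * x * θinv := by rw [← hcentral x]; simp only [mul_assoc]
    _ = x * θinv := by rw [hθ', one_mul]
  -- comultiplication of θinv
  have hΔθinv : Bialgebra.comulAlgHom k H θinv
      = (θinv ⊗ₜ[k] θinv) * (R * tflip k H R) := by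
    have h2 : Bialgebra.comulAlgHom k H θinv * Bialgebra.comulAlgHom k H θ = 1 := by
      rw [← map_mul, hθ', map_one]
    have h1 : Bialgebra.comulAlgHom k H θ
        * ((θinv ⊗ₜ[k] θinv) * (R * tflip k H R)) = 1 := by
      rw [hΔθ]
      calc tflip k H Rinv * Rinv * (θ ⊗ₜ[k] θ) * ((θinv ⊗ₜ[k] θinv) * (R * tflip k H R))
          = tflip k H Rinv * Rinv * ((θ ⊗ₜ[k] θ) * (θinv ⊗ₜ[k] θinv)) * (R * tflip k H R) := by
            simp only [mul_assoc]
        _ = tflip k H Rinv * Rinv * (R * tflip k H R) := by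
            rw [Algebra.TensorProduct.tmul_mul_tmul, hθ,
              ← Algebra.TensorProduct.one_def, mul_one]
        _ = tflip k H Rinv * (Rinv * R) * tflip k H R := by
            simp only [mul_assoc]
        _ = tflip k H Rinv * tflip k H R := by rw [hRl, mul_one]
        _ = tflip k H (Rinv * R) := (map_mul _ _ _).symm
        _ = 1 := by rw [hRl, map_one]
    calc Bialgebra.comulAlgHom k H θinv
        = Bialgebra.comulAlgHom k H θinv *
            (Bialgebra.comulAlgHom k H θ * ((θinv ⊗ₜ[k] θinv) * (R * tflip k H R))) := by
          rw [h1, mul_one]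
      _ = Bialgebra.comulAlgHom k H θinv * Bialgebra.comulAlgHom k H θ *
            ((θinv ⊗ₜ[k] θinv) * (R * tflip k H R)) := by rw [mul_assoc]
      _ = (θinv ⊗ₜ[k] θinv) * (R * tflip k H R) := by rw [h2, one_mul]
  -- Yang–Baxter and its leg variants
  have YBE1 : leg12 k H R * leg13 k H R * leg23 k H R
      = leg23 k H R * leg13 k H R * leg12 k H R := by
    have step := intertwine23 k H R hcom R
    rw [hhexR, map_mul, t23_leg12, t23_leg13, ← mul_assoc] at step
    exact step
  have YBE4 : leg13 k H R * leg12 k H R * leg23 k H (tflip k H R)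
      = leg23 k H (tflip k H R) * leg12 k H R * leg13 k H R := by
    have h := congrArg (t23 k H) YBE1
    simpa only [map_mul, t23_leg12, t23_leg13, t23_leg23] using h
  have YBE2 : leg12 k H (tflip k H R) * leg23 k H R * leg13 k H R
      = leg13 k H R * leg23 k H R * leg12 k H (tflip k H R) := by
    have h := congrArg (t12 k H) YBE1
    simpa only [map_mul, t12_leg12, t12_leg13, t12_leg23] using h
  have YBE6 : leg13 k H (tflip k H R) * leg23 k H (tflip k H R) * leg12 k H R
      = leg12 k H R * leg23 k H (tflip k H R) * leg13 k H (tflip k H R) := by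
    have h := congrArg (t23 k H) YBE2
    simpa only [map_mul, t23_leg12, t23_leg13, t23_leg23] using h
  have YBE3 : leg23 k H (tflip k H R) * leg13 k H (tflip k H R) * leg12 k H (tflip k H R)
      = leg12 k H (tflip k H R) * leg13 k H (tflip k H R) * leg23 k H (tflip k H R) := by
    have h := congrArg (t12 k H) YBE6
    simpa only [map_mul, t12_leg12, t12_leg13, t12_leg23] using h
  have core := core_identity (leg12 k H R) (leg12 k H (tflip k H R)) (leg13 k H R)
    (leg13 k H (tflip k H R)) (leg23 k H R) (leg23 k H (tflip k H R)) YBE1 YBE2 YBE3 YBE4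
  -- central elements in H ⊗ H ⊗ H
  have honec : ∀ x : H, (1 : H) * x = x * 1 := fun x => by rw [one_mul, mul_one]
  have hE3c : ∀ z : H ⊗[k] (H ⊗[k] H),
      ((1 : H) ⊗ₜ[k] ((1 : H) ⊗ₜ[k] θinv)) * z
        = z * ((1 : H) ⊗ₜ[k] ((1 : H) ⊗ₜ[k] θinv)) :=
    central_tmul3 k H 1 1 θinv honec honec hinvc
  have hE23 : ((1 : H) ⊗ₜ[k] (θinv ⊗ₜ[k] (1 : H)))
        * ((1 : H) ⊗ₜ[k] ((1 : H) ⊗ₜ[k] θinv))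
      = (1 : H) ⊗ₜ[k] (θinv ⊗ₜ[k] θinv) := by
    rw [Algebra.TensorProduct.tmul_mul_tmul, Algebra.TensorProduct.tmul_mul_tmul,
      one_mul, one_mul, mul_one]
  -- the three pieces
  have hcomulτR : comulRight k H (tflip k H R)
      = leg13 k H (tflip k H R) * leg12 k H (tflip k H R) := by
    rw [comulRight_tflip, hhexL, map_mul, map_mul, t23_leg23, t23_leg13,
      t12_leg23, t12_leg12]
  have hL : comulRight k H (((1 : H) ⊗ₜ[k] θinv) * R * tflip k H R)
      = ((1 : H) ⊗ₜ[k] (θinv ⊗ₜ[k] θinv)) * (leg23 k H R * (leg23 k H (tflip k H R) *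
          (leg12 k H R * (leg13 k H R *
            (leg13 k H (tflip k H R) * leg12 k H (tflip k H R)))))) := by
    rw [map_mul, map_mul, hcomulτR, hhexR, comulRight_tmul, hΔθinv, ← leg23_apply,
      map_mul, map_mul, leg23_apply]
    simp only [mul_assoc]
  have hleg12 : leg12 k H (((1 : H) ⊗ₜ[k] θinv) * R * tflip k H R)
      = ((1 : H) ⊗ₜ[k] (θinv ⊗ₜ[k] (1 : H)))
          * (leg12 k H R * leg12 k H (tflip k H R)) := by
    rw [map_mul, map_mul, leg12_tmul, mul_assoc]
  have hleg13 : leg13 k H (((1 : H) ⊗ₜ[k] θinv) * R * tflip k H R)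
      = ((1 : H) ⊗ₜ[k] ((1 : H) ⊗ₜ[k] θinv))
          * (leg13 k H R * leg13 k H (tflip k H R)) := by
    rw [map_mul, map_mul, leg13_tmul, mul_assoc]
  have hRHS : leg12 k H (((1 : H) ⊗ₜ[k] θinv) * R * tflip k H R) * leg23 k H R
        * (((1 : H) ⊗ₜ[k] ((1 : H) ⊗ₜ[k] θinv))
            * (leg13 k H R * leg13 k H (tflip k H R)))
        * leg23 k H (tflip k H R)
      = ((1 : H) ⊗ₜ[k] (θinv ⊗ₜ[k] θinv)) * (leg12 k H R * (leg12 k H (tflip k H R) *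
          (leg23 k H R * (leg13 k H R *
            (leg13 k H (tflip k H R) * leg23 k H (tflip k H R)))))) := by
    rw [hleg12]
    simp only [mul_assoc]
    rw [swap_central (hE3c (leg23 k H R)), swap_central (hE3c (leg12 k H (tflip k H R))),
      swap_central (hE3c (leg12 k H R)), ← mul_assoc, hE23]
  rw [hL, hleg13, hRHS, core]
end
end
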